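/- Let A, B be distinct binary strings and a, b ≥ 1 integers. If s contains the substring A^a B^b (or B^b A^a) and every trace in T deletes a full copy of A or a full copy of B from this substring, then T does not unambiguously reconstruct s. (Necessary condition 3.) -/
import Mathlib


/-- `strPow A k` is the concatenation `A^k` of `k` copies of `A`. -/
def strPow (A : List Bool) (k : ℕ) : List Bool := (List.replicate k A).flatten

/-- **Necessary condition 3.** Suppose `A ≠ B` are nonempty, `a, b ≥ 1`, and `s`
contains the substring `A^a B^b` (or `B^b A^a`), i.e. `s = u ++ A^a ++ B^b ++ v`
(or `s = u ++ B^b ++ A^a ++ v`).  If every trace in `T` deletes a full copy of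
`A` or a full copy of `B` from this substring, then `T` does not unambiguously
reconstruct `s`. -/
lemma strPow_succ (A : List Bool) (k : ℕ) : strPow A (k+1) = A ++ strPow A k := by
  simp [strPow, List.replicate_succ]

lemma strPow_succ' (A : List Bool) (k : ℕ) : strPow A (k+1) = strPow A k ++ A := by
  simp [strPow, List.replicate_succ']

lemma strPow_length (A : List Bool) (k : ℕ) : (strPow A k).length = k * A.length := by
  induction k with
  | zero => simp [strPow]
  | succ n ih => rw [strPow_succ]; simp [ih]; ring

lemma comm_strPow {A B : List Bool} (h : A ++ B = B ++ A) (k : ℕ) :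
    A ++ strPow B k = strPow B k ++ A := by
  induction k with
  | zero => simp [strPow]
  | succ n ih =>
    rw [strPow_succ, ← List.append_assoc, h, List.append_assoc, ih, List.append_assoc]

lemma prefix_of_comm {A B : List Bool} (h : A ++ B = B ++ A) (hl : A.length ≤ B.length) :
    A <+: B := by
  have h1 : (A ++ B).take A.length = A := by
    simp [List.take_append, List.take_length]
  have h2 : (B ++ A).take A.length = B.take A.length := by
    rw [List.take_append]
    simp [Nat.sub_eq_zero_of_le hl]
  rw [h, h2] at h1
  rw [← h1]
  exact B.take_prefix A.length

lemma main_lemma (A B u v : List Bool) (a b : ℕ) (hA : A ≠ []) (hB : B ≠ [])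
    (ha : 1 ≤ a) (hb : 1 ≤ b) (T : Set (List Bool))
    (ht : ∀ t ∈ T, t.Sublist (u ++ strPow A (a - 1) ++ strPow B b ++ v) ∨
                   t.Sublist (u ++ strPow A a ++ strPow B (b - 1) ++ v)) :
    ∃ s' : List Bool, s' ≠ u ++ strPow A a ++ strPow B b ++ v ∧
      s'.length = (u ++ strPow A a ++ strPow B b ++ v).length ∧ ∀ t ∈ T, t.Sublist s' := by
  obtain ⟨a', rfl⟩ : ∃ a', a = a' + 1 := ⟨a - 1, (Nat.succ_pred_eq_of_pos ha).symm⟩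
  obtain ⟨b', rfl⟩ : ∃ b', b = b' + 1 := ⟨b - 1, (Nat.succ_pred_eq_of_pos hb).symm⟩
  simp only [Nat.add_sub_cancel] at ht
  set s : List Bool := u ++ strPow A (a'+1) ++ strPow B (b'+1) ++ v with hs
  set X₁ : List Bool := u ++ strPow A a' ++ strPow B (b'+1) ++ v with hX₁
  set X₂ : List Bool := u ++ strPow A (a'+1) ++ strPow B b' ++ v with hX₂
  set Y : List Bool := u ++ (strPow A a' ++ B ++ A ++ strPow B b') ++ v with hY
  have hX₁Y : X₁.Sublist Y := by
    rw [hX₁, hY, strPow_succ]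
    simp only [List.append_assoc]
    refine (List.Sublist.refl u).append ?_
    refine (List.Sublist.refl (strPow A a')).append ?_
    refine (List.Sublist.refl B).append ?_
    exact ((List.nil_sublist A).append (List.Sublist.refl _)).trans (by simp)
  have hX₂Y : X₂.Sublist Y := by
    rw [hX₂, hY, strPow_succ']
    simp only [List.append_assoc]
    refine (List.Sublist.refl u).append ?_
    refine (List.Sublist.refl (strPow A a')).append ?_
    exact ((List.nil_sublist B).append (List.Sublist.refl _)).trans (by simp)
  by_cases hYs : Y = s
  · -- commuting case : A ++ B = B ++ A
    have hcomm : B ++ A = A ++ B := by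
      have h1 : s = u ++ (strPow A a' ++ A ++ B ++ strPow B b') ++ v := by
        rw [hs, strPow_succ' A a', strPow_succ B b']
        simp [List.append_assoc]
      have h2 : Y = s := hYs
      rw [h1, hY] at h2
      have h3 : strPow A a' ++ B ++ A ++ strPow B b' = strPow A a' ++ A ++ B ++ strPow B b' :=
        List.append_cancel_left (List.append_cancel_right h2)
      simp only [List.append_assoc] at h3
      have h4 := List.append_cancel_left h3
      rw [← List.append_assoc, ← List.append_assoc] at h4
      exact List.append_cancel_right h4
    rcases le_or_gt A.length B.length with hab | hab
    · -- A is a prefix of B; X₂ <+ X₁; pad X₁ with |A| constants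
      have hpre : A.Sublist B := (prefix_of_comm hcomm.symm hab).sublist
      have hX21 : X₂.Sublist X₁ := by
        have e2 : X₂ = u ++ strPow A a' ++ (strPow B b' ++ (A ++ v)) := by
          rw [hX₂, strPow_succ' A a']
          simp only [List.append_assoc]
          rw [show A ++ (strPow B b' ++ v) = strPow B b' ++ (A ++ v) from by
              rw [← List.append_assoc, comm_strPow hcomm.symm, List.append_assoc]]
        have e1 : X₁ = u ++ strPow A a' ++ (strPow B b' ++ (B ++ v)) := by
          rw [hX₁, strPow_succ' B b']
          simp [List.append_assoc]
        rw [e1, e2]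
        exact (List.Sublist.refl (u ++ strPow A a')).append
          ((List.Sublist.refl (strPow B b')).append (hpre.append (List.Sublist.refl v)))
      have hlen : ∀ c : Bool, (X₁ ++ List.replicate A.length c).length = s.length := by
        intro c
        simp [hX₁, hs, strPow_length, strPow_succ']
        ring
      have hsub : ∀ c : Bool, ∀ t ∈ T, t.Sublist (X₁ ++ List.replicate A.length c) := by
        intro c t htT
        rcases ht t htT with h' | h'
        · exact (h'.trans (List.sublist_append_left _ _))
        · exact ((h'.trans hX21).trans (List.sublist_append_left _ _))
      by_cases hc : X₁ ++ List.replicate A.length true = s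
      · refine ⟨X₁ ++ List.replicate A.length false, ?_, hlen false, hsub false⟩
        intro hc'
        rw [← hc] at hc'
        have h5 := List.append_cancel_left hc'
        have hA1 : A.length ≠ 0 := by simpa using hA
        have := List.replicate_right_injective hA1 h5
        simp at this
      · exact ⟨X₁ ++ List.replicate A.length true, hc, hlen true, hsub true⟩
    · -- B is a prefix of A; X₁ <+ X₂; pad X₂ with |B| constants
      have hpre : B.Sublist A := (prefix_of_comm hcomm hab.le).sublist
      have hX12 : X₁.Sublist X₂ := by
        have e1 : X₁ = u ++ strPow A a' ++ (B ++ (strPow B b' ++ v)) := by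
          rw [hX₁, strPow_succ B b']
          simp [List.append_assoc]
        have e2 : X₂ = u ++ strPow A a' ++ (A ++ (strPow B b' ++ v)) := by
          rw [hX₂, strPow_succ' A a']
          simp [List.append_assoc]
        rw [e1, e2]
        exact (List.Sublist.refl (u ++ strPow A a')).append
          (hpre.append (List.Sublist.refl (strPow B b' ++ v)))
      have hlen : ∀ c : Bool, (X₂ ++ List.replicate B.length c).length = s.length := by
        intro c
        simp [hX₂, hs, strPow_length, strPow_succ']
        ring
      have hsub : ∀ c : Bool, ∀ t ∈ T, t.Sublist (X₂ ++ List.replicate B.length c) := by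
        intro c t htT
        rcases ht t htT with h' | h'
        · exact ((h'.trans hX12).trans (List.sublist_append_left _ _))
        · exact (h'.trans (List.sublist_append_left _ _))
      by_cases hc : X₂ ++ List.replicate B.length true = s
      · refine ⟨X₂ ++ List.replicate B.length false, ?_, hlen false, hsub false⟩
        intro hc'
        rw [← hc] at hc'
        have h5 := List.append_cancel_left hc'
        have hB1 : B.length ≠ 0 := by simpa using hB
        have := List.replicate_right_injective hB1 h5
        simp at this
      · exact ⟨X₂ ++ List.replicate B.length true, hc, hlen true, hsub true⟩
  · refine ⟨Y, hYs, ?_, ?_⟩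
    · simp [hY, hs, strPow_length, strPow_succ']
      ring
    · intro t htT
      rcases ht t htT with h' | h'
      · exact h'.trans hX₁Y
      · exact h'.trans hX₂Y

theorem not_unambiguous_of_AB_block_deleted
    (A B s u v : List Bool) (a b : ℕ) (hAB : A ≠ B) (hA : A ≠ []) (hB : B ≠ [])
    (ha : 1 ≤ a) (hb : 1 ≤ b) (T : Set (List Bool))
    (h : (s = u ++ strPow A a ++ strPow B b ++ v ∧
            ∀ t ∈ T, t.Sublist (u ++ strPow A (a - 1) ++ strPow B b ++ v) ∨
                     t.Sublist (u ++ strPow A a ++ strPow B (b - 1) ++ v))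
       ∨ (s = u ++ strPow B b ++ strPow A a ++ v ∧
            ∀ t ∈ T, t.Sublist (u ++ strPow B (b - 1) ++ strPow A a ++ v) ∨
                     t.Sublist (u ++ strPow B b ++ strPow A (a - 1) ++ v))) :
    ∃ s' : List Bool, s' ≠ s ∧ s'.length = s.length ∧ ∀ t ∈ T, t.Sublist s' := by
  rcases h with ⟨rfl, ht⟩ | ⟨rfl, ht⟩
  · exact main_lemma A B u v a b hA hB ha hb T ht
  · exact main_lemma B A u v b a hB hA hb ha T ht
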